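/- Let Z be a set of data records, let m, n ∈ ℕ with m ≤ n and q = m/n, and let ℳ be a mechanism assigning to each dataset of m records a probability measure on a measurable space (Ω, 𝒜). Let P and Q be probability measures on a common measurable space such that for every pair of datasets D, D' of size m differing in exactly one entry and every α > 0, H_α(ℳ(D) ‖ ℳ(D')) ≤ H_α(P ‖ Q). Define the subsampled mechanism 𝑀̃ on datasets X of size n by 𝑀̃(X) = (1 / C(n, m)) Σ_S ℳ(X_S), the uniform mixture of ℳ applied to all size-m subsets X_S of X. Then for every pair of datasets X, Y of size n differing in exactly one entry: H_α(𝑀̃(X) ‖ 𝑀̃(Y)) ≤ H_α(q P + (1 − q) Q ‖ Q) for all α ≥ 1, and H_α(𝑀̃(X) ‖ 𝑀̃(Y)) ≤ H_α(P ‖ q Q + (1 − q) P) for all 0 ≤ α < 1. -/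

import Mathlib

open MeasureTheory

/-- The hockey-stick divergence of order `α ≥ 0` between two measures, as the supremum
over measurable events `E` of `μ(E) - α ν(E)` (truncated at `0`). -/
noncomputable def hsDiv {Ω : Type*} [MeasurableSpace Ω] (α : ℝ) (μ ν : Measure Ω) :
    ENNReal :=
  ⨆ (E : Set Ω) (_ : MeasurableSet E), μ E - ENNReal.ofReal α * ν E

set_option maxHeartbeats 2000000

lemma ennreal_add_sub_add_right (a b c : ENNReal) (hc : c ≠ ⊤) :
    (a + c) - (b + c) = a - b := by
  rw [add_comm b c, tsub_add_eq_tsub_tsub, ENNReal.add_sub_cancel_right hc]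

lemma couple0 {β : Type*} [DecidableEq β] (C : Multiset β) (f : Multiset β → ENNReal) :
    ((C.powersetCard 0).map (fun S => ((C - S).map (fun c => f (c ::ₘ S))).sum)).sum
      = ((C.powersetCard 1).map f).sum := by
  simp [Multiset.powersetCard_one, Multiset.map_map, Function.comp]

lemma couple {β : Type*} [DecidableEq β] :
    ∀ (C : Multiset β) (k : ℕ) (f : Multiset β → ENNReal),
      ((C.powersetCard k).map (fun S => ((C - S).map (fun c => f (c ::ₘ S))).sum)).sum
        = (↑(k + 1) : ENNReal) * ((C.powersetCard (k + 1)).map f).sum := by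
  intro C
  induction C using Multiset.induction_on with
  | empty =>
    intro k f
    cases k with
    | zero => rw [couple0]; simp
    | succ k => simp [Multiset.powersetCard_zero_right]
  | cons a C ih =>
    intro k f
    cases k with
    | zero => rw [couple0]; simp
    | succ k =>
      rw [Multiset.powersetCard_cons, Multiset.map_add, Multiset.sum_add]
      have h1 : ((C.powersetCard (k+1)).map
          (fun S => (((a ::ₘ C) - S).map (fun c => f (c ::ₘ S))).sum)).sum
          = ((C.powersetCard (k+1)).map (fun S => f (a ::ₘ S))).sum
            + (↑(k+2) : ENNReal) * ((C.powersetCard (k+2)).map f).sum := by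
        rw [← ih (k+1) f, ← Multiset.sum_map_add]
        apply congrArg
        apply Multiset.map_congr rfl
        intro S hS
        obtain ⟨hle, -⟩ := Multiset.mem_powersetCard.mp hS
        rw [Multiset.cons_sub_of_le _ hle, Multiset.map_cons, Multiset.sum_cons]
      have h2 : ((Multiset.map (Multiset.cons a) (C.powersetCard k)).map
          (fun S => (((a ::ₘ C) - S).map (fun c => f (c ::ₘ S))).sum)).sum
          = (↑(k+1) : ENNReal) * ((C.powersetCard (k+1)).map (fun S => f (a ::ₘ S))).sum := by
        rw [Multiset.map_map, ← ih k (fun U => f (a ::ₘ U))]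
        apply congrArg
        apply Multiset.map_congr rfl
        intro S hS
        simp only [Function.comp_apply]
        rw [Multiset.sub_cons, Multiset.erase_cons_head]
        apply congrArg
        apply Multiset.map_congr rfl
        intro c hc
        rw [Multiset.cons_swap]
      rw [h1, h2, Multiset.powersetCard_cons, Multiset.map_add, Multiset.sum_add,
        Multiset.map_map]
      simp only [Function.comp]
      push_cast
      ring

lemma msum_apply {ι Ω : Type*} [MeasurableSpace Ω] (s : Multiset ι) (M : ι → Measure Ω)
    (E : Set Ω) : (s.map M).sum E = (s.map (fun i => M i E)).sum := by
  induction s using Multiset.induction_on with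
  | empty => simp
  | cons a s ih => simp [Measure.add_apply, ih]

lemma le_hsDiv {Ω : Type*} [MeasurableSpace Ω] (α : ℝ) (μ ν : Measure Ω) {E : Set Ω}
    (hE : MeasurableSet E) : μ E - ENNReal.ofReal α * ν E ≤ hsDiv α μ ν :=
  le_iSup₂_of_le E hE le_rfl

lemma le_hsDiv' {Ω : Type*} [MeasurableSpace Ω] (α : ℝ) (μ ν : Measure Ω) {E : Set Ω}
    (hE : MeasurableSet E) : μ E ≤ hsDiv α μ ν + ENNReal.ofReal α * ν E :=
  tsub_le_iff_right.mp (le_hsDiv α μ ν hE)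

lemma hsDiv_le_iff {Ω : Type*} [MeasurableSpace Ω] {α : ℝ} {μ ν : Measure Ω} {c : ENNReal} :
    hsDiv α μ ν ≤ c ↔ ∀ E : Set Ω, MeasurableSet E → μ E ≤ c + ENNReal.ofReal α * ν E := by
  rw [hsDiv, iSup₂_le_iff]
  exact forall₂_congr fun E hE => tsub_le_iff_right

lemma mul_hsDiv_le_of_forall {Ω : Type*} [MeasurableSpace Ω] (β : ℝ) (μ ν : Measure Ω)
    (c T : ENNReal)
    (hper : ∀ E : Set Ω, MeasurableSet E → c * (μ E - ENNReal.ofReal β * ν E) ≤ T) :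
    c * hsDiv β μ ν ≤ T := by
  rw [hsDiv, ENNReal.mul_iSup]
  refine iSup_le fun E => ?_
  rw [ENNReal.mul_iSup]
  exact iSup_le fun hE => hper E hE

/-- Privacy amplification by subsampling without replacement (substitute relation):
if `(P, Q)` dominates the mechanism `M` on datasets of `m` records, then the subsampled
mechanism `Msub X = (1/C(n,m)) ∑_{S ⊆ X, |S| = m} M(S)` on datasets of `n` records is
dominated by `(q P + (1-q) Q, Q)` for `α ≥ 1` and by `(P, q Q + (1-q) P)` for `0 ≤ α < 1`,
where `q = m/n`. Datasets are multisets, and two datasets are neighboring when they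
differ in exactly one entry. -/
theorem stmt_14 {Zt Ω Ω' : Type*} [MeasurableSpace Ω] [MeasurableSpace Ω']
    (m n : ℕ) (hm : 0 < m) (hmn : m ≤ n)
    (M : Multiset Zt → Measure Ω)
    (hMprob : ∀ D : Multiset Zt, Multiset.card D = m → IsProbabilityMeasure (M D))
    (P Q : Measure Ω') [IsProbabilityMeasure P] [IsProbabilityMeasure Q]
    (hdom : ∀ D D' : Multiset Zt, Multiset.card D = m → Multiset.card D' = m →
      (∃ C z z', z ≠ z' ∧ D = z ::ₘ C ∧ D' = z' ::ₘ C) →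
      ∀ α : ℝ, 0 < α → hsDiv α (M D) (M D') ≤ hsDiv α P Q)
    (Msub : Multiset Zt → Measure Ω)
    (hMsub : ∀ X : Multiset Zt,
      Msub X = ((n.choose m : ENNReal))⁻¹ • ((X.powersetCard m).map M).sum)
    (X Y : Multiset Zt) (hX : Multiset.card X = n) (hY : Multiset.card Y = n)
    (hXY : ∃ C z z', z ≠ z' ∧ X = z ::ₘ C ∧ Y = z' ::ₘ C) :
    (∀ α : ℝ, 1 ≤ α →
      hsDiv α (Msub X) (Msub Y) ≤
        hsDiv α (ENNReal.ofReal ((m : ℝ) / n) • P + ENNReal.ofReal (1 - (m : ℝ) / n) • Q)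
          Q) ∧
    (∀ α : ℝ, 0 ≤ α → α < 1 →
      hsDiv α (Msub X) (Msub Y) ≤
        hsDiv α P
          (ENNReal.ofReal ((m : ℝ) / n) • Q + ENNReal.ofReal (1 - (m : ℝ) / n) • P)) := by
  classical
  obtain ⟨C, z, z', hzz', rfl, rfl⟩ := hXY
  obtain ⟨k, rfl⟩ : ∃ k, m = k + 1 := ⟨m - 1, (Nat.succ_pred_eq_of_pos hm).symm⟩
  have hn0 : 0 < n := lt_of_lt_of_le hm hmn
  have hCn : Multiset.card C + 1 = n := by simpa using hX
  have hnR : (0:ℝ) < n := by exact_mod_cast hn0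
  have hmR : (0:ℝ) < ((k+1:ℕ):ℝ) := by positivity
  have hmnR : ((k+1:ℕ):ℝ) ≤ (n:ℝ) := by exact_mod_cast hmn
  set N : ℕ := n.choose (k+1) with hN
  have hNpos : 0 < N := Nat.choose_pos hmn
  set K : ℕ := (Multiset.card C).choose k with hK
  have hnK : n * K = N * (k + 1) := by
    have h := Nat.add_one_mul_choose_eq (Multiset.card C) k
    rw [hCn] at h
    exact h
  have hNe0 : (N : ENNReal) ≠ 0 := by exact_mod_cast hNpos.ne'
  have hNet : (N : ENNReal) ≠ ⊤ := ENNReal.natCast_ne_top _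
  have hme0 : ((k+1 : ℕ) : ENNReal) ≠ 0 := by exact_mod_cast (Nat.succ_ne_zero k)
  have hmet : ((k+1 : ℕ) : ENNReal) ≠ ⊤ := ENNReal.natCast_ne_top _
  have hnm_cast : ((n - (k+1) : ℕ) : ℝ) = (n:ℝ) - ((k+1:ℕ):ℝ) :=
    Nat.cast_sub hmn
  have hcard1 : ∀ S : Multiset Zt, S ∈ Multiset.powersetCard k C → ∀ w : Zt,
      Multiset.card (w ::ₘ S) = k + 1 := by
    intro S hS w
    rw [Multiset.card_cons, (Multiset.mem_powersetCard.mp hS).2]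
  have hsubcard : ∀ S : Multiset Zt, S ∈ Multiset.powersetCard k C →
      Multiset.card (C - S) = n - (k+1) := by
    intro S hS
    rw [Multiset.card_sub (Multiset.mem_powersetCard.mp hS).1,
      (Multiset.mem_powersetCard.mp hS).2]
    omega
  have pairbound : ∀ (β : ℝ), 0 < β → ∀ (S : Multiset Zt), S ∈ Multiset.powersetCard k C →
      ∀ (w w' : Zt), w ≠ w' → ∀ E : Set Ω, MeasurableSet E →
      M (w ::ₘ S) E ≤ hsDiv β P Q + ENNReal.ofReal β * M (w' ::ₘ S) E := by
    intro β hβ S hS w w' hww' E hE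
    have hd := hdom (w ::ₘ S) (w' ::ₘ S) (hcard1 S hS w) (hcard1 S hS w')
      ⟨S, w, w', hww', rfl, rfl⟩ β hβ
    exact le_trans (le_hsDiv' β _ _ hE) (add_le_add_left hd _)
  have reduction : ∀ (β : ℝ) (H : ENNReal),
      (∀ E : Set Ω, MeasurableSet E →
        ((Multiset.powersetCard (k+1) C).map (fun S => M S E)).sum
          + ((Multiset.powersetCard k C).map (fun S => M (z ::ₘ S) E)).sum
        ≤ (N : ENNReal) * H + ENNReal.ofReal β *
          (((Multiset.powersetCard (k+1) C).map (fun S => M S E)).sum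
            + ((Multiset.powersetCard k C).map (fun S => M (z' ::ₘ S) E)).sum)) →
      hsDiv β (Msub (z ::ₘ C)) (Msub (z' ::ₘ C)) ≤ H := by
    intro β H hkey
    rw [hsDiv_le_iff]
    intro E hE
    rw [hMsub, hMsub, Measure.smul_apply, Measure.smul_apply, smul_eq_mul, smul_eq_mul,
      msum_apply, msum_apply, Multiset.powersetCard_cons, Multiset.powersetCard_cons,
      Multiset.map_add, Multiset.map_add, Multiset.sum_add, Multiset.sum_add,
      Multiset.map_map, Multiset.map_map]
    simp only [Function.comp_def]
    refine le_trans (mul_le_mul_right (hkey E hE) (N : ENNReal)⁻¹) ?_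
    rw [mul_add, ← mul_assoc, ENNReal.inv_mul_cancel hNe0 hNet, one_mul, mul_left_comm]
  constructor
  · -- case α ≥ 1
    intro α hα
    have hα0 : (0:ℝ) ≤ α := by linarith
    set α' : ℝ := (((k+1:ℕ):ℝ) + (α-1)*n) / ((k+1:ℕ):ℝ) with hα'
    have hα'1 : 1 ≤ α' := by
      rw [hα', le_div_iff₀ hmR]
      nlinarith
    have hα'0 : 0 < α' := lt_of_lt_of_le one_pos hα'1
    set h := hsDiv α' P Q with hh
    set H := hsDiv α (ENNReal.ofReal (((k+1:ℕ):ℝ) / n) • P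
        + ENNReal.ofReal (1 - ((k+1:ℕ):ℝ) / n) • Q) Q with hH
    have scaling : ((k+1:ℕ) : ENNReal) * h ≤ (n : ENNReal) * H := by
      rw [hh]
      apply mul_hsDiv_le_of_forall
      intro E hE
      have hsub1 : ((k+1:ℕ):ENNReal) * (ENNReal.ofReal α' * Q E)
          + ((n-(k+1):ℕ):ENNReal) * Q E = ENNReal.ofReal (α * n) * Q E := by
        rw [← mul_assoc, ← add_mul]
        congr 1
        rw [← ENNReal.ofReal_natCast (k+1), ← ENNReal.ofReal_natCast (n - (k+1)),
          ← ENNReal.ofReal_mul (by positivity),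
          ← ENNReal.ofReal_add (mul_nonneg (Nat.cast_nonneg _) hα'0.le) (Nat.cast_nonneg _)]
        congr 1
        rw [hnm_cast, hα']
        field_simp
        ring
      have e1 : ((k+1:ℕ) : ENNReal) * (P E - ENNReal.ofReal α' * Q E)
          = (((k+1:ℕ):ENNReal) * P E + ((n-(k+1):ℕ):ENNReal) * Q E)
            - ENNReal.ofReal (α * n) * Q E := by
        rw [ENNReal.mul_sub (fun _ _ => hmet),
          ← ennreal_add_sub_add_right (((k+1:ℕ):ENNReal) * P E)
            (((k+1:ℕ):ENNReal) * (ENNReal.ofReal α' * Q E)) (((n-(k+1):ℕ):ENNReal) * Q E)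
            (ENNReal.mul_ne_top (ENNReal.natCast_ne_top _) (measure_ne_top Q E)), hsub1]
      have g1 : (n:ENNReal) * (ENNReal.ofReal (((k+1:ℕ):ℝ)/n) * P E)
          = ((k+1:ℕ):ENNReal) * P E := by
        rw [← mul_assoc, ← ENNReal.ofReal_natCast n, ← ENNReal.ofReal_mul (by positivity),
          ← ENNReal.ofReal_natCast (k+1)]
        congr 2
        field_simp
      have g2 : (n:ENNReal) * (ENNReal.ofReal (1 - ((k+1:ℕ):ℝ)/n) * Q E)
          = ((n-(k+1):ℕ):ENNReal) * Q E := by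
        rw [← mul_assoc, ← ENNReal.ofReal_natCast n, ← ENNReal.ofReal_mul (by positivity),
          ← ENNReal.ofReal_natCast (n - (k+1))]
        congr 2
        rw [hnm_cast]
        field_simp
      have g3 : (n:ENNReal) * (ENNReal.ofReal α * Q E) = ENNReal.ofReal (α * n) * Q E := by
        rw [← mul_assoc, ← ENNReal.ofReal_natCast n, ← ENNReal.ofReal_mul (by positivity)]
        congr 2
        ring
      have e2 : (n : ENNReal) * ((ENNReal.ofReal (((k+1:ℕ):ℝ) / n) • P
          + ENNReal.ofReal (1 - ((k+1:ℕ):ℝ) / n) • Q) E - ENNReal.ofReal α * Q E)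
          = (((k+1:ℕ):ENNReal) * P E + ((n-(k+1):ℕ):ENNReal) * Q E)
            - ENNReal.ofReal (α * n) * Q E := by
        rw [Measure.add_apply, Measure.smul_apply, Measure.smul_apply, smul_eq_mul,
          smul_eq_mul, ENNReal.mul_sub (fun _ _ => ENNReal.natCast_ne_top n), mul_add, g1,
          g2, g3]
      rw [e1, ← e2, hH]
      exact mul_le_mul_right (le_hsDiv α _ Q hE) _
    refine reduction α H ?_
    intro E hE
    have perS : ∀ S ∈ Multiset.powersetCard k C,
        ((k+1:ℕ):ENNReal) * M (z ::ₘ S) E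
          ≤ ((k+1:ℕ):ENNReal) * h + ENNReal.ofReal (((k+1:ℕ):ℝ) * α) * M (z' ::ₘ S) E
            + ENNReal.ofReal (α - 1) * ((C - S).map (fun c => M (c ::ₘ S) E)).sum := by
      intro S hS
      have i1 : M (z ::ₘ S) E ≤ h + ENNReal.ofReal α' * M (z' ::ₘ S) E :=
        pairbound α' hα'0 S hS z z' hzz' E hE
      have i2 : ∀ c ∈ C - S, M (z ::ₘ S) E ≤ h + ENNReal.ofReal α' * M (c ::ₘ S) E := by
        intro c hc
        by_cases hzc : z = c
        · subst hzc
          have h1 : M (z ::ₘ S) E ≤ ENNReal.ofReal α' * M (z ::ₘ S) E := by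
            refine le_mul_of_one_le_left zero_le ?_
            rw [← ENNReal.ofReal_one]
            exact ENNReal.ofReal_le_ofReal hα'1
          exact h1.trans (self_le_add_left _ _)
        · exact pairbound α' hα'0 S hS z c hzc E hE
      have i2' : ((n-(k+1):ℕ):ENNReal) * M (z ::ₘ S) E
          ≤ ((n-(k+1):ℕ):ENNReal) * h
            + ENNReal.ofReal α' * ((C - S).map (fun c => M (c ::ₘ S) E)).sum := by
        have hc := hsubcard S hS
        calc ((n-(k+1):ℕ):ENNReal) * M (z ::ₘ S) E
            = ((C - S).map (fun _ => M (z ::ₘ S) E)).sum := by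
              rw [Multiset.map_const', Multiset.sum_replicate, hc, nsmul_eq_mul]
          _ ≤ ((C - S).map (fun c => h + ENNReal.ofReal α' * M (c ::ₘ S) E)).sum :=
              Multiset.sum_map_le_sum_map _ _ i2
          _ = _ := by
              rw [Multiset.sum_map_add, Multiset.map_const', Multiset.sum_replicate, hc,
                nsmul_eq_mul, Multiset.sum_map_mul_left]
      have hcoef : ENNReal.ofReal (((k+1:ℕ):ℝ) * α)
          + ENNReal.ofReal (α - 1) * ((n-(k+1):ℕ):ENNReal)
          = ENNReal.ofReal α' * ((k+1:ℕ):ENNReal) := by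
        rw [← ENNReal.ofReal_natCast (n-(k+1)), ← ENNReal.ofReal_natCast (k+1),
          ← ENNReal.ofReal_mul (by linarith), ← ENNReal.ofReal_mul (le_of_lt hα'0),
          ← ENNReal.ofReal_add (mul_nonneg (Nat.cast_nonneg _) hα0)
            (mul_nonneg (by linarith) (Nat.cast_nonneg _))]
        congr 1
        rw [hnm_cast, hα']
        field_simp
        ring
      have c1 := mul_le_mul_right i1 (ENNReal.ofReal (((k+1:ℕ):ℝ) * α))
      have c2 := mul_le_mul_right i2' (ENNReal.ofReal (α - 1))
      have hadd := add_le_add c1 c2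
      have hL : ENNReal.ofReal (((k+1:ℕ):ℝ) * α) * M (z ::ₘ S) E
          + ENNReal.ofReal (α - 1) * (((n-(k+1):ℕ):ENNReal) * M (z ::ₘ S) E)
          = ENNReal.ofReal α' * (((k+1:ℕ):ENNReal) * M (z ::ₘ S) E) := by
        calc ENNReal.ofReal (((k+1:ℕ):ℝ) * α) * M (z ::ₘ S) E
            + ENNReal.ofReal (α - 1) * (((n-(k+1):ℕ):ENNReal) * M (z ::ₘ S) E)
            = (ENNReal.ofReal (((k+1:ℕ):ℝ) * α)
              + ENNReal.ofReal (α-1) * ((n-(k+1):ℕ):ENNReal)) * M (z ::ₘ S) E := by ring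
          _ = _ := by rw [hcoef]; ring
      have hR : ENNReal.ofReal (((k+1:ℕ):ℝ) * α) * (h + ENNReal.ofReal α' * M (z' ::ₘ S) E)
          + ENNReal.ofReal (α-1) * (((n-(k+1):ℕ):ENNReal) * h
            + ENNReal.ofReal α' * ((C - S).map (fun c => M (c ::ₘ S) E)).sum)
          = ENNReal.ofReal α' * (((k+1:ℕ):ENNReal) * h
            + ENNReal.ofReal (((k+1:ℕ):ℝ) * α) * M (z' ::ₘ S) E
            + ENNReal.ofReal (α-1) * ((C - S).map (fun c => M (c ::ₘ S) E)).sum) := by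
        calc ENNReal.ofReal (((k+1:ℕ):ℝ) * α) * (h + ENNReal.ofReal α' * M (z' ::ₘ S) E)
            + ENNReal.ofReal (α-1) * (((n-(k+1):ℕ):ENNReal) * h
              + ENNReal.ofReal α' * ((C - S).map (fun c => M (c ::ₘ S) E)).sum)
            = (ENNReal.ofReal (((k+1:ℕ):ℝ) * α)
                + ENNReal.ofReal (α-1) * ((n-(k+1):ℕ):ENNReal)) * h
              + ENNReal.ofReal α' * (ENNReal.ofReal (((k+1:ℕ):ℝ) * α) * M (z' ::ₘ S) E
                + ENNReal.ofReal (α-1) * ((C - S).map (fun c => M (c ::ₘ S) E)).sum) := by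
              ring
          _ = _ := by rw [hcoef]; ring
      rw [hL, hR] at hadd
      exact (ENNReal.mul_le_mul_iff_right
        (by rw [Ne, ENNReal.ofReal_eq_zero]; exact not_le.mpr hα'0)
        ENNReal.ofReal_ne_top).mp hadd
    have sumS := Multiset.sum_map_le_sum_map _ _ perS
    have hco : ((Multiset.powersetCard k C).map
        (fun S => ((C - S).map (fun c => M (c ::ₘ S) E)).sum)).sum
        = (↑(k+1) : ENNReal) * ((Multiset.powersetCard (k+1) C).map (fun S => M S E)).sum :=
      couple C k (fun T => M T E)
    have hLs : ((Multiset.powersetCard k C).map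
        (fun S => ((k+1:ℕ):ENNReal) * M (z ::ₘ S) E)).sum
        = ((k+1:ℕ):ENNReal)
          * ((Multiset.powersetCard k C).map (fun S => M (z ::ₘ S) E)).sum :=
      Multiset.sum_map_mul_left
    have hRs : ((Multiset.powersetCard k C).map (fun S => ((k+1:ℕ):ENNReal) * h
          + ENNReal.ofReal (((k+1:ℕ):ℝ) * α) * M (z' ::ₘ S) E
          + ENNReal.ofReal (α-1) * ((C - S).map (fun c => M (c ::ₘ S) E)).sum)).sum
        = (K:ENNReal) * (((k+1:ℕ):ENNReal) * h)
          + ENNReal.ofReal (((k+1:ℕ):ℝ) * α)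
            * ((Multiset.powersetCard k C).map (fun S => M (z' ::ₘ S) E)).sum
          + ENNReal.ofReal (α-1) * (((k+1:ℕ):ENNReal)
            * ((Multiset.powersetCard (k+1) C).map (fun S => M S E)).sum) := by
      rw [Multiset.sum_map_add, Multiset.sum_map_add]
      congr 1
      · congr 1
        · rw [Multiset.map_const', Multiset.sum_replicate, Multiset.card_powersetCard,
            ← hK, nsmul_eq_mul]
        · exact Multiset.sum_map_mul_left
      · rw [Multiset.sum_map_mul_left, hco]
    rw [hLs, hRs] at sumS
    -- final assembly
    have hone : (1:ENNReal) + ENNReal.ofReal (α-1) = ENNReal.ofReal α := by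
      rw [← ENNReal.ofReal_one, ← ENNReal.ofReal_add zero_le_one (by linarith)]
      norm_num
    have hcα : ENNReal.ofReal (((k+1:ℕ):ℝ) * α)
        = ENNReal.ofReal α * ((k+1:ℕ):ENNReal) := by
      rw [ENNReal.ofReal_mul (by positivity), ENNReal.ofReal_natCast, mul_comm]
    set sb := ((Multiset.powersetCard (k+1) C).map (fun S => M S E)).sum with hsb
    set sa := ((Multiset.powersetCard k C).map (fun S => M (z ::ₘ S) E)).sum with hsa
    set sa' := ((Multiset.powersetCard k C).map (fun S => M (z' ::ₘ S) E)).sum with hsa'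
    have hcan : ((k+1:ℕ):ENNReal) * (sb + sa)
        ≤ ((k+1:ℕ):ENNReal) * ((N:ENNReal) * H + ENNReal.ofReal α * (sb + sa')) := by
      calc ((k+1:ℕ):ENNReal) * (sb + sa)
          = ((k+1:ℕ):ENNReal) * sb + ((k+1:ℕ):ENNReal) * sa := mul_add _ _ _
        _ ≤ ((k+1:ℕ):ENNReal) * sb + ((K:ENNReal) * (((k+1:ℕ):ENNReal) * h)
              + ENNReal.ofReal (((k+1:ℕ):ℝ) * α) * sa'
              + ENNReal.ofReal (α-1) * (((k+1:ℕ):ENNReal) * sb)) := add_le_add_right sumS _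
        _ = (K:ENNReal) * (((k+1:ℕ):ENNReal) * h)
              + ENNReal.ofReal (((k+1:ℕ):ℝ) * α) * sa'
              + (1 + ENNReal.ofReal (α-1)) * (((k+1:ℕ):ENNReal) * sb) := by ring
        _ = (K:ENNReal) * (((k+1:ℕ):ENNReal) * h)
              + ENNReal.ofReal (((k+1:ℕ):ℝ) * α) * sa'
              + ENNReal.ofReal α * (((k+1:ℕ):ENNReal) * sb) := by rw [hone]
        _ ≤ (K:ENNReal) * ((n:ENNReal) * H)
              + ENNReal.ofReal (((k+1:ℕ):ℝ) * α) * sa'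
              + ENNReal.ofReal α * (((k+1:ℕ):ENNReal) * sb) := by gcongr
        _ = ((k+1:ℕ):ENNReal) * ((N:ENNReal) * H)
              + ENNReal.ofReal (((k+1:ℕ):ℝ) * α) * sa'
              + ENNReal.ofReal α * (((k+1:ℕ):ENNReal) * sb) := by
            rw [← mul_assoc, ← Nat.cast_mul, mul_comm K n, hnK, Nat.cast_mul,
              mul_comm ((N:ENNReal)) (((k+1:ℕ):ENNReal)), mul_assoc]
        _ = ((k+1:ℕ):ENNReal) * ((N:ENNReal) * H + ENNReal.ofReal α * (sb + sa')) := by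
            rw [hcα]; ring
    exact (ENNReal.mul_le_mul_iff_right hme0 hmet).mp hcan
  · -- case 0 ≤ α < 1
    intro α hα0 hα1
    rcases lt_or_eq_of_le hα0 with hαpos | hαeq
    · -- 0 < α < 1
      set d : ℝ := (n:ℝ) - α * ((n:ℝ) - ((k+1:ℕ):ℝ)) with hd
      have hdpos : 0 < d := by rw [hd]; nlinarith
      set α₂ : ℝ := α * ((k+1:ℕ):ℝ) / d with hα₂
      have hα₂pos : 0 < α₂ := by rw [hα₂]; positivity
      have hα₂le1 : α₂ ≤ 1 := by
        rw [hα₂, div_le_one hdpos, hd]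
        nlinarith
      have hdα₂ : d * α₂ = α * ((k+1:ℕ):ℝ) := by
        rw [hα₂]; field_simp
      set h := hsDiv α₂ P Q with hh
      set H := hsDiv α P (ENNReal.ofReal (((k+1:ℕ):ℝ) / n) • Q
          + ENNReal.ofReal (1 - ((k+1:ℕ):ℝ) / n) • P) with hH
      have scaling : ENNReal.ofReal d * h ≤ (n : ENNReal) * H := by
        rw [hh]
        apply mul_hsDiv_le_of_forall
        intro E hE
        have e1 : ENNReal.ofReal d * (P E - ENNReal.ofReal α₂ * Q E)
            = ENNReal.ofReal d * P E - ENNReal.ofReal (α * ((k+1:ℕ):ℝ)) * Q E := by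
          rw [ENNReal.mul_sub (fun _ _ => ENNReal.ofReal_ne_top), ← mul_assoc,
            ← ENNReal.ofReal_mul hdpos.le, hdα₂]
        have hmixE : ((ENNReal.ofReal (((k+1:ℕ):ℝ) / n) • Q
            + ENNReal.ofReal (1 - ((k+1:ℕ):ℝ) / n) • P) E)
            = ENNReal.ofReal (((k+1:ℕ):ℝ) / n) * Q E
              + ENNReal.ofReal (1 - ((k+1:ℕ):ℝ) / n) * P E := by
          rw [Measure.add_apply, Measure.smul_apply, Measure.smul_apply, smul_eq_mul,
            smul_eq_mul]
        have ha : (n:ENNReal) * (ENNReal.ofReal α * (ENNReal.ofReal (((k+1:ℕ):ℝ)/n) * Q E))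
            = ENNReal.ofReal (α * ((k+1:ℕ):ℝ)) * Q E := by
          rw [← mul_assoc, ← mul_assoc, ← ENNReal.ofReal_natCast n,
            ← ENNReal.ofReal_mul (by positivity), ← ENNReal.ofReal_mul (by positivity)]
          congr 2
          field_simp
        have hb : (n:ENNReal) * (ENNReal.ofReal α
              * (ENNReal.ofReal (1 - ((k+1:ℕ):ℝ)/n) * P E))
            = ENNReal.ofReal (α * ((n:ℝ) - ((k+1:ℕ):ℝ))) * P E := by
          rw [← mul_assoc, ← mul_assoc, ← ENNReal.ofReal_natCast n,
            ← ENNReal.ofReal_mul (by positivity), ← ENNReal.ofReal_mul (by positivity)]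
          congr 2
          field_simp
        have f3 : (n:ENNReal) * P E = ENNReal.ofReal d * P E
            + ENNReal.ofReal (α * ((n:ℝ) - ((k+1:ℕ):ℝ))) * P E := by
          rw [← add_mul, ← ENNReal.ofReal_add hdpos.le (by nlinarith),
            ← ENNReal.ofReal_natCast n]
          congr 2
          rw [hd]; ring
        have e2 : (n : ENNReal) * (P E - ENNReal.ofReal α * ((ENNReal.ofReal (((k+1:ℕ):ℝ) / n) • Q
            + ENNReal.ofReal (1 - ((k+1:ℕ):ℝ) / n) • P) E))
            = ENNReal.ofReal d * P E - ENNReal.ofReal (α * ((k+1:ℕ):ℝ)) * Q E := by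
          rw [hmixE, mul_add (ENNReal.ofReal α),
            ENNReal.mul_sub (fun _ _ => ENNReal.natCast_ne_top n), mul_add ((n:ENNReal)),
            ha, hb, f3, ennreal_add_sub_add_right _ _ _
              (ENNReal.mul_ne_top ENNReal.ofReal_ne_top (measure_ne_top P E))]
        rw [e1, ← e2, hH]
        exact mul_le_mul_right (le_hsDiv α P _ hE) _
      refine reduction α H ?_
      intro E hE
      have perS : ∀ S ∈ Multiset.powersetCard k C,
          ((k+1:ℕ):ENNReal) * M (z ::ₘ S) E
            + ENNReal.ofReal (1-α) * ((C - S).map (fun c => M (c ::ₘ S) E)).sum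
          ≤ ENNReal.ofReal d * h + ENNReal.ofReal (α * ((k+1:ℕ):ℝ)) * M (z' ::ₘ S) E := by
        intro S hS
        have j1 : M (z ::ₘ S) E ≤ h + ENNReal.ofReal α₂ * M (z' ::ₘ S) E :=
          pairbound α₂ hα₂pos S hS z z' hzz' E hE
        have j2 : ∀ c ∈ C - S, M (c ::ₘ S) E ≤ h + ENNReal.ofReal α₂ * M (z' ::ₘ S) E := by
          intro c hc
          by_cases hcz : c = z'
          · subst hcz
            haveI := hMprob (c ::ₘ S) (hcard1 S hS c)
            have hple : M (c ::ₘ S) E ≤ 1 := prob_le_one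
            have h1 : ENNReal.ofReal (1 - α₂) ≤ h := by
              refine le_trans ?_ (le_hsDiv α₂ P Q MeasurableSet.univ)
              rw [measure_univ, measure_univ, mul_one, ← ENNReal.ofReal_one,
                ← ENNReal.ofReal_sub _ hα₂pos.le]
            calc M (c ::ₘ S) E
                = (ENNReal.ofReal (1-α₂) + ENNReal.ofReal α₂) * M (c ::ₘ S) E := by
                  rw [← ENNReal.ofReal_add (by linarith) hα₂pos.le]
                  norm_num
              _ = ENNReal.ofReal (1-α₂) * M (c ::ₘ S) E
                  + ENNReal.ofReal α₂ * M (c ::ₘ S) E := add_mul _ _ _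
              _ ≤ ENNReal.ofReal (1-α₂) * 1 + ENNReal.ofReal α₂ * M (c ::ₘ S) E := by gcongr
              _ = ENNReal.ofReal (1-α₂) + ENNReal.ofReal α₂ * M (c ::ₘ S) E := by
                  rw [mul_one]
              _ ≤ h + ENNReal.ofReal α₂ * M (c ::ₘ S) E := add_le_add_left h1 _
          · exact pairbound α₂ hα₂pos S hS c z' hcz E hE
        have j2' : ((C - S).map (fun c => M (c ::ₘ S) E)).sum
            ≤ ((n-(k+1):ℕ):ENNReal) * (h + ENNReal.ofReal α₂ * M (z' ::ₘ S) E) := by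
          calc ((C - S).map (fun c => M (c ::ₘ S) E)).sum
              ≤ ((C - S).map (fun _ => h + ENNReal.ofReal α₂ * M (z' ::ₘ S) E)).sum :=
                Multiset.sum_map_le_sum_map _ _ j2
            _ = _ := by
                rw [Multiset.map_const', Multiset.sum_replicate, hsubcard S hS, nsmul_eq_mul]
        have hcoef : ((k+1:ℕ):ENNReal) + ENNReal.ofReal (1-α) * ((n-(k+1):ℕ):ENNReal)
            = ENNReal.ofReal d := by
          rw [← ENNReal.ofReal_natCast (n-(k+1)), ← ENNReal.ofReal_natCast (k+1),
            ← ENNReal.ofReal_mul (by linarith),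
            ← ENNReal.ofReal_add (Nat.cast_nonneg _)
              (mul_nonneg (by linarith) (Nat.cast_nonneg _))]
          congr 1
          rw [hnm_cast, hd]
          ring
        calc ((k+1:ℕ):ENNReal) * M (z ::ₘ S) E
            + ENNReal.ofReal (1-α) * ((C - S).map (fun c => M (c ::ₘ S) E)).sum
            ≤ ((k+1:ℕ):ENNReal) * (h + ENNReal.ofReal α₂ * M (z' ::ₘ S) E)
              + ENNReal.ofReal (1-α) * (((n-(k+1):ℕ):ENNReal)
                * (h + ENNReal.ofReal α₂ * M (z' ::ₘ S) E)) := by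
              gcongr
          _ = (((k+1:ℕ):ENNReal) + ENNReal.ofReal (1-α) * ((n-(k+1):ℕ):ENNReal))
              * (h + ENNReal.ofReal α₂ * M (z' ::ₘ S) E) := by ring
          _ = ENNReal.ofReal d * (h + ENNReal.ofReal α₂ * M (z' ::ₘ S) E) := by rw [hcoef]
          _ = ENNReal.ofReal d * h
              + ENNReal.ofReal d * ENNReal.ofReal α₂ * M (z' ::ₘ S) E := by ring
          _ = ENNReal.ofReal d * h
              + ENNReal.ofReal (α * ((k+1:ℕ):ℝ)) * M (z' ::ₘ S) E := by
              rw [← ENNReal.ofReal_mul hdpos.le, hdα₂]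
      have sumS := Multiset.sum_map_le_sum_map _ _ perS
      have hco : ((Multiset.powersetCard k C).map
          (fun S => ((C - S).map (fun c => M (c ::ₘ S) E)).sum)).sum
          = (↑(k+1) : ENNReal) * ((Multiset.powersetCard (k+1) C).map (fun S => M S E)).sum :=
        couple C k (fun T => M T E)
      have hLs : ((Multiset.powersetCard k C).map
          (fun S => ((k+1:ℕ):ENNReal) * M (z ::ₘ S) E
            + ENNReal.ofReal (1-α) * ((C - S).map (fun c => M (c ::ₘ S) E)).sum)).sum
          = ((k+1:ℕ):ENNReal)
              * ((Multiset.powersetCard k C).map (fun S => M (z ::ₘ S) E)).sum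
            + ENNReal.ofReal (1-α) * (((k+1:ℕ):ENNReal)
              * ((Multiset.powersetCard (k+1) C).map (fun S => M S E)).sum) := by
        rw [Multiset.sum_map_add]
        congr 1
        · exact Multiset.sum_map_mul_left
        · rw [Multiset.sum_map_mul_left, hco]
      have hRs : ((Multiset.powersetCard k C).map (fun S => ENNReal.ofReal d * h
          + ENNReal.ofReal (α * ((k+1:ℕ):ℝ)) * M (z' ::ₘ S) E)).sum
          = (K:ENNReal) * (ENNReal.ofReal d * h)
            + ENNReal.ofReal (α * ((k+1:ℕ):ℝ))
              * ((Multiset.powersetCard k C).map (fun S => M (z' ::ₘ S) E)).sum := by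
        rw [Multiset.sum_map_add]
        congr 1
        · rw [Multiset.map_const', Multiset.sum_replicate, Multiset.card_powersetCard,
            ← hK, nsmul_eq_mul]
        · exact Multiset.sum_map_mul_left
      rw [hLs, hRs] at sumS
      have hone : ENNReal.ofReal α + ENNReal.ofReal (1-α) = 1 := by
        rw [← ENNReal.ofReal_add hα0 (by linarith)]
        norm_num
      set sb := ((Multiset.powersetCard (k+1) C).map (fun S => M S E)).sum with hsb
      set sa := ((Multiset.powersetCard k C).map (fun S => M (z ::ₘ S) E)).sum with hsa
      set sa' := ((Multiset.powersetCard k C).map (fun S => M (z' ::ₘ S) E)).sum with hsa'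
      have hcα : ENNReal.ofReal (α * ((k+1:ℕ):ℝ))
          = ENNReal.ofReal α * ((k+1:ℕ):ENNReal) := by
        rw [ENNReal.ofReal_mul hα0, ENNReal.ofReal_natCast]
      have hsplit1 : ((k+1:ℕ):ENNReal) * sb
          = ENNReal.ofReal α * (((k+1:ℕ):ENNReal) * sb)
            + ENNReal.ofReal (1-α) * (((k+1:ℕ):ENNReal) * sb) := by
        rw [← add_mul, hone, one_mul]
      have hcan : ((k+1:ℕ):ENNReal) * (sb + sa)
          ≤ ((k+1:ℕ):ENNReal) * ((N:ENNReal) * H + ENNReal.ofReal α * (sb + sa')) := by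
        calc ((k+1:ℕ):ENNReal) * (sb + sa)
            = ((k+1:ℕ):ENNReal) * sb + ((k+1:ℕ):ENNReal) * sa := mul_add _ _ _
          _ = ENNReal.ofReal α * (((k+1:ℕ):ENNReal) * sb)
              + ENNReal.ofReal (1-α) * (((k+1:ℕ):ENNReal) * sb)
              + ((k+1:ℕ):ENNReal) * sa := by conv_lhs => rw [hsplit1]
          _ = ENNReal.ofReal α * (((k+1:ℕ):ENNReal) * sb)
              + (((k+1:ℕ):ENNReal) * sa
                + ENNReal.ofReal (1-α) * (((k+1:ℕ):ENNReal) * sb)) := by ring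
          _ ≤ ENNReal.ofReal α * (((k+1:ℕ):ENNReal) * sb)
              + ((K:ENNReal) * (ENNReal.ofReal d * h)
                + ENNReal.ofReal (α * ((k+1:ℕ):ℝ)) * sa') := add_le_add_right sumS _
          _ ≤ ENNReal.ofReal α * (((k+1:ℕ):ENNReal) * sb)
              + ((K:ENNReal) * ((n:ENNReal) * H)
                + ENNReal.ofReal (α * ((k+1:ℕ):ℝ)) * sa') := by gcongr
          _ = ENNReal.ofReal α * (((k+1:ℕ):ENNReal) * sb)
              + (((k+1:ℕ):ENNReal) * ((N:ENNReal) * H)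
                + ENNReal.ofReal (α * ((k+1:ℕ):ℝ)) * sa') := by
              rw [← mul_assoc ((K:ENNReal)) ((n:ENNReal)) H, ← Nat.cast_mul,
                mul_comm K n, hnK, Nat.cast_mul,
                mul_comm ((N:ENNReal)) (((k+1:ℕ):ENNReal)),
                mul_assoc (((k+1:ℕ):ENNReal)) ((N:ENNReal)) H]
          _ = ((k+1:ℕ):ENNReal) * ((N:ENNReal) * H + ENNReal.ofReal α * (sb + sa')) := by
              rw [hcα]; ring
      exact (ENNReal.mul_le_mul_iff_right hme0 hmet).mp hcan
    · -- α = 0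
      subst hαeq
      rw [hsDiv_le_iff]
      intro E hE
      have hb : Msub (z ::ₘ C) E ≤ 1 := by
        rw [hMsub, Measure.smul_apply, smul_eq_mul, msum_apply]
        have hle : ((Multiset.powersetCard (k+1) (z ::ₘ C)).map (fun S => M S E)).sum
            ≤ ((Multiset.powersetCard (k+1) (z ::ₘ C)).map (fun _ => (1:ENNReal))).sum := by
          apply Multiset.sum_map_le_sum_map
          intro S hS
          haveI := hMprob S (Multiset.mem_powersetCard.mp hS).2
          exact prob_le_one
        have hconst : ((Multiset.powersetCard (k+1) (z ::ₘ C)).map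
            (fun _ => (1:ENNReal))).sum = (N:ENNReal) := by
          rw [Multiset.map_const', Multiset.sum_replicate, Multiset.card_powersetCard, hX,
            nsmul_eq_mul, mul_one, hN]
        refine le_trans (mul_le_mul_right hle _) ?_
        rw [hconst, ENNReal.inv_mul_cancel hNe0 hNet]
      have h1 : (1:ENNReal) ≤ hsDiv 0 P (ENNReal.ofReal (((k+1:ℕ):ℝ) / n) • Q
          + ENNReal.ofReal (1 - ((k+1:ℕ):ℝ) / n) • P) := by
        refine le_trans ?_ (le_hsDiv 0 _ _ MeasurableSet.univ)
        simp
      exact le_trans hb (le_trans h1 le_self_add)
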